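/- Let s ∈ (0,1/2) and b > 0, and for r > 0 and t ≥ 0 define I^{±}(r,t) = 4π ∫_{0}^{∞} sin(πs) e^{−tσ} σ^s (σ+2r)^s / |σ^s (σ+2r)^s e^{iπs} ∓ b(σ+r)|² dσ. Then as (r,t) → (0⁺, 0⁺), I^{±}(r,t) converges to the finite limit 4π sin(πs) ∫_{0}^{∞} σ^{2s} / |σ^{2s} e^{iπs} ∓ bσ|² dσ, and in particular this limiting integral is finite. -/

import Mathlib

open MeasureTheory Set Filter Topology

lemma key_abs (s x y : ℝ) :
    ‖(x:ℂ) * Complex.exp (Complex.I * (Real.pi:ℂ) * (s:ℂ)) - (y:ℂ)‖ ^ 2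
      = (x * Real.cos (Real.pi*s) - y)^2 + (x * Real.sin (Real.pi*s))^2 := by
  have h : (Complex.I * (Real.pi:ℂ) * (s:ℂ)) = ((Real.pi*s : ℝ):ℂ) * Complex.I := by
    push_cast; ring
  rw [h, Complex.exp_mul_I, Complex.sq_norm, Complex.normSq_apply]
  simp only [← Complex.ofReal_mul, Complex.cos_ofReal_re, Complex.cos_ofReal_im,
    Complex.sin_ofReal_re, Complex.sin_ofReal_im, Complex.sub_re, Complex.sub_im,
    Complex.mul_re, Complex.mul_im, Complex.add_re, Complex.add_im, Complex.ofReal_re,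
    Complex.ofReal_im, Complex.I_re, Complex.I_im]
  ring

lemma key_lb1 (s ε b x u : ℝ) :
    (x * Real.sin (Real.pi*s))^2
      ≤ ‖(x:ℂ) * Complex.exp (Complex.I * (Real.pi:ℂ) * (s:ℂ))
          - (ε:ℂ) * (b:ℂ) * (u:ℂ)‖ ^ 2 := by
  have h : (ε:ℂ)*(b:ℂ)*(u:ℂ) = ((ε*b*u:ℝ):ℂ) := by push_cast; ring
  rw [h, key_abs]
  nlinarith [sq_nonneg (x * Real.cos (Real.pi*s) - ε*b*u)]

lemma key_lb2 (s ε b x u : ℝ) :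
    (ε * b * u * Real.sin (Real.pi*s))^2
      ≤ ‖(x:ℂ) * Complex.exp (Complex.I * (Real.pi:ℂ) * (s:ℂ))
          - (ε:ℂ) * (b:ℂ) * (u:ℂ)‖ ^ 2 := by
  have h : (ε:ℂ)*(b:ℂ)*(u:ℂ) = ((ε*b*u:ℝ):ℂ) := by push_cast; ring
  rw [h, key_abs]
  have hpyth := Real.sin_sq_add_cos_sq (Real.pi*s)
  set y := ε*b*u
  have key : (x * Real.cos (Real.pi*s) - y)^2 + (x * Real.sin (Real.pi*s))^2
      - (y * Real.sin (Real.pi*s))^2 = (x - y * Real.cos (Real.pi*s))^2 := by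
    linear_combination (x^2 - y^2) * hpyth
  nlinarith [sq_nonneg (x - y * Real.cos (Real.pi*s))]

lemma aux_int (s C1 C2 : ℝ) (hs0 : 0 < s) (hs2 : s < 1/2) :
    IntegrableOn (fun σ : ℝ => if σ ≤ 1 then C1 * σ^(-(2*s)) else C2 * σ^(2*s-2))
      (Set.Ioi (0:ℝ)) := by
  have h1 : IntegrableOn (fun σ : ℝ => C1 * σ^(-(2*s))) (Ioc (0:ℝ) 1) := by
    have := intervalIntegral.intervalIntegrable_rpow' (a:=(0:ℝ)) (b:=1) (r := -(2*s))
      (by linarith)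
    exact ((intervalIntegrable_iff_integrableOn_Ioc_of_le zero_le_one).mp this).const_mul C1
  have h2 : IntegrableOn (fun σ : ℝ => C2 * σ^(2*s-2)) (Ioi (1:ℝ)) :=
    (integrableOn_Ioi_rpow_of_lt (by linarith) one_pos).const_mul C2
  have e : Ioc (0:ℝ) 1 ∪ Ioi 1 = Ioi 0 := Set.Ioc_union_Ioi_eq_Ioi zero_le_one
  rw [← e]
  refine IntegrableOn.union ?_ ?_
  · exact h1.congr_fun (fun σ hσ => by simp [hσ.2]) measurableSet_Ioc
  · exact h2.congr_fun (fun σ hσ => by simp [not_le.mpr (show (1:ℝ) < σ from hσ)]) measurableSet_Ioi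

open Filter

/-- The branch-cut integral `I^{±}(r,t)`, where `ε = 1` corresponds to the `+` superscript
(and hence to the `-` sign in the denominator `|⋯ ∓ b(σ+r)|²`), and `ε = -1` to `-`. -/
noncomputable def branchCutIntegral (s b ε r t : ℝ) : ℝ :=
  4 * Real.pi * ∫ σ in Set.Ioi (0 : ℝ),
    Real.sin (Real.pi * s) * Real.exp (-(t * σ)) * σ ^ s * (σ + 2 * r) ^ s /
      ‖((σ ^ s * (σ + 2 * r) ^ s : ℝ) : ℂ) *
          Complex.exp (Complex.I * (Real.pi : ℂ) * (s : ℂ)) -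
        (ε : ℂ) * (b : ℂ) * ((σ + r : ℝ) : ℂ)‖ ^ 2

/-- Let `s ∈ (0,1/2)` and `b > 0`. As `(r,t) → (0⁺,0⁺)`, the integrals `I^{±}(r,t)`
converge to the finite limit `4π sin(πs) ∫_0^∞ σ^{2s}/|σ^{2s} e^{iπs} ∓ bσ|² dσ`;
in particular this limiting integral is finite (the integrand is integrable on `(0,∞)`). -/
theorem stmt_5 (s b : ℝ) (hs0 : 0 < s) (hs2 : s < 1 / 2) (hb : 0 < b)
    (ε : ℝ) (hε : ε = 1 ∨ ε = -1) :
    MeasureTheory.IntegrableOn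
      (fun σ : ℝ => σ ^ (2 * s) /
        ‖((σ ^ (2 * s) : ℝ) : ℂ) *
            Complex.exp (Complex.I * (Real.pi : ℂ) * (s : ℂ)) -
          (ε : ℂ) * (b : ℂ) * (σ : ℂ)‖ ^ 2)
      (Set.Ioi (0 : ℝ)) ∧
    Tendsto (fun p : ℝ × ℝ => branchCutIntegral s b ε p.1 p.2)
      ((nhdsWithin (0 : ℝ) (Set.Ioi 0)) ×ˢ (nhdsWithin (0 : ℝ) (Set.Ioi 0)))
      (nhds (4 * Real.pi * Real.sin (Real.pi * s) *
        ∫ σ in Set.Ioi (0 : ℝ),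
          σ ^ (2 * s) /
            ‖((σ ^ (2 * s) : ℝ) : ℂ) *
                Complex.exp (Complex.I * (Real.pi : ℂ) * (s : ℂ)) -
              (ε : ℂ) * (b : ℂ) * (σ : ℂ)‖ ^ 2)) := by
  constructor
  · set c := Real.sin (Real.pi * s) with hc_def
    have hc : 0 < c := Real.sin_pos_of_pos_of_lt_pi (by positivity)
      (by nlinarith [Real.pi_pos])
    have hε2 : ε^2 = 1 := by rcases hε with h | h <;> simp [h]
    set f := fun σ : ℝ => σ ^ (2 * s) /
          ‖((σ ^ (2 * s) : ℝ) : ℂ) *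
              Complex.exp (Complex.I * (Real.pi : ℂ) * (s : ℂ)) -
            (ε : ℂ) * (b : ℂ) * (σ : ℂ)‖ ^ 2 with hf_def
    have hDpos : ∀ σ : ℝ, 0 < σ → 0 < ‖((σ ^ (2 * s) : ℝ) : ℂ) *
              Complex.exp (Complex.I * (Real.pi : ℂ) * (s : ℂ)) -
            (ε : ℂ) * (b : ℂ) * (σ : ℂ)‖ ^ 2 := by
      intro σ hσ
      have h1 := key_lb1 s ε b (σ ^ (2*s)) σ
      have hx : 0 < σ ^ (2*s) := Real.rpow_pos_of_pos hσ _
      nlinarith [mul_pos hx hc]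
    have hmeas : AEStronglyMeasurable f (volume.restrict (Ioi (0:ℝ))) := by
      apply ContinuousOn.aestronglyMeasurable _ measurableSet_Ioi
      intro σ hσ
      apply ContinuousAt.continuousWithinAt
      apply ContinuousAt.div
      · exact Real.continuousAt_rpow_const σ (2*s) (Or.inl (ne_of_gt hσ))
      · apply ContinuousAt.pow
        apply ContinuousAt.norm
        apply ContinuousAt.sub
        · exact ((Complex.continuous_ofReal.continuousAt.comp
            (Real.continuousAt_rpow_const σ (2*s) (Or.inl (ne_of_gt hσ)))).mul
            continuousAt_const)
        · exact (continuous_const.mul Complex.continuous_ofReal).continuousAt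
      · exact (hDpos σ hσ).ne'
    apply Integrable.mono' (aux_int s (1/c^2) (1/(b^2*c^2)) hs0 hs2) hmeas
    rw [ae_restrict_iff' measurableSet_Ioi]
    refine Filter.Eventually.of_forall (fun σ hσ => ?_)
    simp only [Set.mem_Ioi] at hσ
    have hx : 0 < σ ^ (2*s) := Real.rpow_pos_of_pos hσ _
    have hD := hDpos σ hσ
    set D := ‖((σ ^ (2 * s) : ℝ) : ℂ) *
              Complex.exp (Complex.I * (Real.pi : ℂ) * (s : ℂ)) -
            (ε : ℂ) * (b : ℂ) * (σ : ℂ)‖ ^ 2 with hD_def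
    have hfnn : 0 ≤ f σ := div_nonneg hx.le hD.le
    rw [Real.norm_of_nonneg hfnn]
    by_cases h1 : σ ≤ 1
    · rw [if_pos h1]
      have hlb : (σ^(2*s) * c)^2 ≤ D := key_lb1 s ε b (σ ^ (2*s)) σ
      calc f σ ≤ σ^(2*s) / ((σ^(2*s)*c)^2) := by
            apply div_le_div_of_nonneg_left hx.le (by positivity) hlb
        _ = (1/c^2) * σ^(-(2*s)) := by
            rw [Real.rpow_neg hσ.le, inv_eq_one_div, div_mul_div_comm, one_mul,
              div_eq_div_iff (by positivity) (by positivity)]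
            ring
    · rw [if_neg h1]
      push_neg at h1
      have hlb : (ε*b*σ * c)^2 ≤ D := key_lb2 s ε b (σ ^ (2*s)) σ
      have hlb' : (b*σ*c)^2 ≤ D := by nlinarith
      calc f σ ≤ σ^(2*s) / ((b*σ*c)^2) := by
            apply div_le_div_of_nonneg_left hx.le (by positivity) hlb'
        _ = (1/(b^2*c^2)) * σ^(2*s-2) := by
            have h2 : σ ^ (2*s-2) = σ^(2*s) / σ^2 := by
              rw [Real.rpow_sub hσ, Real.rpow_two]
            rw [h2, div_mul_div_comm, one_mul,
              div_eq_div_iff (by positivity) (by positivity)]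
            ring
  · have hc : 0 < Real.sin (Real.pi * s) := Real.sin_pos_of_pos_of_lt_pi (by positivity)
      (by nlinarith [Real.pi_pos])
    set c := Real.sin (Real.pi * s) with hc_def
    have hε2 : ε^2 = 1 := by rcases hε with h | h <;> simp [h]
    -- the family of integrands
    set F : ℝ × ℝ → ℝ → ℝ := fun p σ =>
      Real.sin (Real.pi * s) * Real.exp (-(p.2 * σ)) * σ ^ s * (σ + 2 * p.1) ^ s /
        ‖((σ ^ s * (σ + 2 * p.1) ^ s : ℝ) : ℂ) *
            Complex.exp (Complex.I * (Real.pi : ℂ) * (s : ℂ)) -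
          (ε : ℂ) * (b : ℂ) * ((σ + p.1 : ℝ) : ℂ)‖ ^ 2 with hF_def
    set f₀ : ℝ → ℝ := fun σ =>
      c * (σ ^ (2 * s) /
        ‖((σ ^ (2 * s) : ℝ) : ℂ) *
            Complex.exp (Complex.I * (Real.pi : ℂ) * (s : ℂ)) -
          (ε : ℂ) * (b : ℂ) * (σ : ℂ)‖ ^ 2) with hf0_def
    set l := (nhdsWithin (0:ℝ) (Set.Ioi 0)) ×ˢ (nhdsWithin (0:ℝ) (Set.Ioi 0)) with hl_def
    -- eventual facts about the parameter
    have hev : ∀ᶠ p : ℝ × ℝ in l, 0 < p.1 ∧ p.1 ≤ 1 ∧ 0 ≤ p.2 := by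
      have h1 : ∀ᶠ r in nhdsWithin (0:ℝ) (Set.Ioi 0), 0 < r ∧ r ≤ 1 := by
        filter_upwards [eventually_mem_nhdsWithin,
          eventually_nhdsWithin_of_eventually_nhds (eventually_lt_nhds (by norm_num : (0:ℝ) < 1))]
          with r hr hr1
        exact ⟨hr, hr1.le⟩
      have h2 : ∀ᶠ t in nhdsWithin (0:ℝ) (Set.Ioi 0), 0 ≤ t := by
        filter_upwards [eventually_mem_nhdsWithin] with t ht using le_of_lt ht
      filter_upwards [h1.prod_inl (nhdsWithin (0:ℝ) (Set.Ioi 0)),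
        h2.prod_inr (nhdsWithin (0:ℝ) (Set.Ioi 0))] with p hp1 hp2
      exact ⟨hp1.1, hp1.2, hp2⟩
    -- measurability
    have hmeas : ∀ᶠ p : ℝ × ℝ in l, AEStronglyMeasurable (F p) (volume.restrict (Ioi (0:ℝ))) := by
      filter_upwards [hev] with p hp
      obtain ⟨hr, hr1, ht⟩ := hp
      apply ContinuousOn.aestronglyMeasurable _ measurableSet_Ioi
      intro σ hσ
      simp only [Set.mem_Ioi] at hσ
      have hσ2r : (0:ℝ) < σ + 2 * p.1 := by linarith
      apply ContinuousAt.continuousWithinAt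
      apply ContinuousAt.div
      · apply ContinuousAt.mul
        · apply ContinuousAt.mul
          · exact (continuous_const.mul (Real.continuous_exp.comp
              ((continuous_const.mul continuous_id).neg))).continuousAt
          · exact Real.continuousAt_rpow_const σ s (Or.inl hσ.ne')
        · exact ContinuousAt.rpow_const ((continuous_id.add continuous_const).continuousAt)
            (Or.inl hσ2r.ne')
      · apply ContinuousAt.pow
        apply ContinuousAt.norm
        apply ContinuousAt.sub
        · apply ContinuousAt.mul _ continuousAt_const
          apply Complex.continuous_ofReal.continuousAt.comp
          exact (Real.continuousAt_rpow_const σ s (Or.inl hσ.ne')).mul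
            (ContinuousAt.rpow_const ((continuous_id.add continuous_const).continuousAt)
              (Or.inl hσ2r.ne'))
        · exact (continuous_const.mul (Complex.continuous_ofReal.comp
            (continuous_id.add continuous_const))).continuousAt
      · -- denominator nonzero
        have h2 := key_lb2 s ε b (σ^s * (σ + 2*p.1)^s) (σ + p.1)
        have hpos : (0:ℝ) < (b * (σ + p.1) * c)^2 := by positivity
        have : (ε * b * (σ + p.1) * c)^2 = ε^2 * (b * (σ + p.1) * c)^2 := by ring
        rw [this, hε2, one_mul] at h2
        exact (lt_of_lt_of_le hpos h2).ne'
    -- uniform bound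
    have hbound : ∀ᶠ p : ℝ × ℝ in l, ∀ᵐ σ ∂(volume.restrict (Ioi (0:ℝ))),
        ‖F p σ‖ ≤ (fun σ : ℝ => if σ ≤ 1 then (1/c) * σ^(-(2*s))
          else ((3:ℝ)^s/(b^2*c)) * σ^(2*s-2)) σ := by
      filter_upwards [hev] with p hp
      obtain ⟨hr, hr1, ht⟩ := hp
      rw [ae_restrict_iff' measurableSet_Ioi]
      refine Filter.Eventually.of_forall (fun σ hσ => ?_)
      simp only [Set.mem_Ioi] at hσ
      have hσ2r : (0:ℝ) < σ + 2 * p.1 := by linarith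
      have hA : (0:ℝ) < σ^s * (σ + 2*p.1)^s :=
        mul_pos (Real.rpow_pos_of_pos hσ s) (Real.rpow_pos_of_pos hσ2r s)
      have hAlb : σ^(2*s) ≤ σ^s * (σ + 2*p.1)^s := by
        have h1 : σ^s ≤ (σ + 2*p.1)^s := Real.rpow_le_rpow hσ.le (by linarith) hs0.le
        have h2 : σ^(2*s) = σ^s * σ^s := by
          rw [← Real.rpow_add hσ]; ring_nf
        rw [h2]
        exact mul_le_mul_of_nonneg_left h1 (Real.rpow_nonneg hσ.le s)
      have hexp : Real.exp (-(p.2 * σ)) ≤ 1 :=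
        Real.exp_le_one_iff.mpr (neg_nonpos.mpr (mul_nonneg ht hσ.le))
      have hexp0 : 0 < Real.exp (-(p.2 * σ)) := Real.exp_pos _
      set D := ‖((σ ^ s * (σ + 2 * p.1) ^ s : ℝ) : ℂ) *
            Complex.exp (Complex.I * (Real.pi : ℂ) * (s : ℂ)) -
          (ε : ℂ) * (b : ℂ) * ((σ + p.1 : ℝ) : ℂ)‖ ^ 2 with hD_def
      have hD1 : (σ^s * (σ + 2*p.1)^s * c)^2 ≤ D := key_lb1 s ε b _ _
      have hD2 : (b * (σ + p.1) * c)^2 ≤ D := by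
        have h2 := key_lb2 s ε b (σ^s * (σ + 2*p.1)^s) (σ + p.1)
        have : (ε * b * (σ + p.1) * c)^2 = ε^2 * (b * (σ + p.1) * c)^2 := by ring
        rw [this, hε2, one_mul] at h2
        exact h2
      have hDpos : 0 < D := lt_of_lt_of_le (by positivity) hD2
      have hFnn : 0 ≤ F p σ := by
        apply div_nonneg _ hDpos.le
        have := Real.rpow_nonneg hσ.le s
        have := Real.rpow_nonneg hσ2r.le s
        positivity
      rw [Real.norm_of_nonneg hFnn]
      by_cases h1 : σ ≤ 1
      · rw [if_pos h1]
        calc F p σ ≤ (c * (σ^s * (σ + 2*p.1)^s)) / (σ^(2*s) * (σ^s * (σ + 2*p.1)^s) * c^2) := by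
              apply div_le_div₀ (by positivity) ?_ ?_ ?_
              · calc c * Real.exp (-(p.2*σ)) * σ^s * (σ + 2*p.1)^s
                    = (c * (σ^s * (σ + 2*p.1)^s)) * Real.exp (-(p.2*σ)) := by ring
                  _ ≤ (c * (σ^s * (σ + 2*p.1)^s)) * 1 :=
                      mul_le_mul_of_nonneg_left hexp (by positivity)
                  _ = c * (σ^s * (σ + 2*p.1)^s) := mul_one _
              · have hx : (0:ℝ) < σ^(2*s) := Real.rpow_pos_of_pos hσ _
                positivity
              · calc σ^(2*s) * (σ^s * (σ + 2*p.1)^s) * c^2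
                    ≤ (σ^s * (σ + 2*p.1)^s) * (σ^s * (σ + 2*p.1)^s) * c^2 := by
                      apply mul_le_mul_of_nonneg_right
                        (mul_le_mul_of_nonneg_right hAlb hA.le) (by positivity)
                  _ = (σ^s * (σ + 2*p.1)^s * c)^2 := by ring
                  _ ≤ D := hD1
          _ = (1/c) * σ^(-(2*s)) := by
              have hx : (0:ℝ) < σ^(2*s) := Real.rpow_pos_of_pos hσ _
              rw [Real.rpow_neg hσ.le, inv_eq_one_div, div_mul_div_comm, one_mul,
                div_eq_div_iff (by positivity) (by positivity)]
              ring
      · rw [if_neg h1]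
        push_neg at h1
        have hAub : σ^s * (σ + 2*p.1)^s ≤ (3:ℝ)^s * σ^(2*s) := by
          have h3 : σ + 2*p.1 ≤ 3*σ := by linarith
          have h4 : (σ + 2*p.1)^s ≤ (3*σ)^s := Real.rpow_le_rpow hσ2r.le h3 hs0.le
          have h5 : ((3:ℝ)*σ)^s = (3:ℝ)^s * σ^s := Real.mul_rpow (by norm_num) hσ.le
          have h6 : σ^(2*s) = σ^s * σ^s := by rw [← Real.rpow_add hσ]; ring_nf
          calc σ^s * (σ + 2*p.1)^s ≤ σ^s * ((3:ℝ)^s * σ^s) := by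
                rw [← h5]; exact mul_le_mul_of_nonneg_left h4 (Real.rpow_nonneg hσ.le s)
            _ = (3:ℝ)^s * σ^(2*s) := by rw [h6]; ring
        have hD2' : (b * σ * c)^2 ≤ D := by
          refine le_trans ?_ hD2
          have hsq : σ^2 ≤ (σ + p.1)^2 := by nlinarith
          calc (b*σ*c)^2 = b^2*c^2*σ^2 := by ring
            _ ≤ b^2*c^2*(σ+p.1)^2 :=
                mul_le_mul_of_nonneg_left hsq (by positivity)
            _ = (b*(σ+p.1)*c)^2 := by ring
        calc F p σ ≤ (c * ((3:ℝ)^s * σ^(2*s))) / ((b * σ * c)^2) := by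
              apply div_le_div₀ (by positivity) ?_ (by positivity) hD2'
              calc c * Real.exp (-(p.2*σ)) * σ^s * (σ + 2*p.1)^s
                  = (c * Real.exp (-(p.2*σ))) * (σ^s * (σ + 2*p.1)^s) := by ring
                _ ≤ (c * 1) * ((3:ℝ)^s * σ^(2*s)) := by
                    apply mul_le_mul (mul_le_mul_of_nonneg_left hexp hc.le) hAub hA.le
                    positivity
                _ = c * ((3:ℝ)^s * σ^(2*s)) := by ring
          _ = ((3:ℝ)^s/(b^2*c)) * σ^(2*s-2) := by
              have h2 : σ ^ (2*s-2) = σ^(2*s) / σ^2 := by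
                rw [Real.rpow_sub hσ, Real.rpow_two]
              rw [h2, div_mul_div_comm,
                div_eq_div_iff (by positivity) (by positivity)]
              ring
    -- pointwise limit
    have hlim : ∀ᵐ σ ∂(volume.restrict (Ioi (0:ℝ))), Tendsto (fun p : ℝ × ℝ => F p σ) l (𝓝 (f₀ σ)) := by
      rw [ae_restrict_iff' measurableSet_Ioi]
      refine Filter.Eventually.of_forall (fun σ hσ => ?_)
      simp only [Set.mem_Ioi] at hσ
      have h2s : σ^s * σ^s = σ^(2*s) := by rw [← Real.rpow_add hσ]; ring_nf
      have hlmono : l ≤ 𝓝 ((0:ℝ), (0:ℝ)) := by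
        rw [hl_def, nhds_prod_eq]
        exact Filter.prod_mono nhdsWithin_le_nhds nhdsWithin_le_nhds
      have hca : ContinuousAt (fun p : ℝ × ℝ => F p σ) ((0:ℝ), (0:ℝ)) := by
        have hσ' : (0:ℝ) < σ + 2 * (0:ℝ) := by linarith
        apply ContinuousAt.div
        · apply ContinuousAt.mul
          · apply ContinuousAt.mul
            · exact (continuous_const.mul (Real.continuous_exp.comp
                ((continuous_snd.mul continuous_const).neg))).continuousAt
            · exact continuousAt_const
          · exact ContinuousAt.rpow_const
              ((continuous_const.add (continuous_const.mul continuous_fst)).continuousAt)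
              (Or.inl hσ'.ne')
        · apply ContinuousAt.pow
          apply ContinuousAt.norm
          apply ContinuousAt.sub
          · apply ContinuousAt.mul _ continuousAt_const
            apply Complex.continuous_ofReal.continuousAt.comp
            exact continuousAt_const.mul
              (ContinuousAt.rpow_const
                ((continuous_const.add (continuous_const.mul continuous_fst)).continuousAt)
                (Or.inl hσ'.ne'))
          · apply ContinuousAt.mul continuousAt_const
            exact (Complex.continuous_ofReal.comp
              (continuous_const.add continuous_fst)).continuousAt
        · -- denominator at (0,0) nonzero
          have h2 := key_lb2 s ε b (σ^s * (σ + 2*(0:ℝ))^s) (σ + (0:ℝ))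
          have hpos : (0:ℝ) < (b * (σ + (0:ℝ)) * c)^2 := by positivity
          have he : (ε * b * (σ + (0:ℝ)) * c)^2 = ε^2 * (b * (σ + (0:ℝ)) * c)^2 := by ring
          rw [he, hε2, one_mul] at h2
          exact (lt_of_lt_of_le hpos h2).ne'
      have hval : F ((0:ℝ), (0:ℝ)) σ = f₀ σ := by
        simp only [hF_def, hf0_def]
        have e1 : σ + 2 * (((0:ℝ),(0:ℝ)) : ℝ × ℝ).1 = σ := by norm_num
        have e2 : σ + (((0:ℝ),(0:ℝ)) : ℝ × ℝ).1 = σ := by norm_num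
        have e3 : -((((0:ℝ),(0:ℝ)) : ℝ × ℝ).2 * σ) = 0 := by norm_num
        rw [e1, e2, e3, h2s, Real.exp_zero]
        rw [show Real.sin (Real.pi*s) * 1 * σ^s * σ^s = c * σ^(2*s) by rw [← h2s]; ring]
        rw [mul_div_assoc]
      have := hca.tendsto
      rw [hval] at this
      exact this.mono_left hlmono
    -- dominated convergence
    have hbint : Integrable (fun σ : ℝ => if σ ≤ 1 then (1/c) * σ^(-(2*s))
        else ((3:ℝ)^s/(b^2*c)) * σ^(2*s-2)) (volume.restrict (Ioi (0:ℝ))) :=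
      aux_int s (1/c) ((3:ℝ)^s/(b^2*c)) hs0 hs2
    have key := tendsto_integral_filter_of_dominated_convergence _ hmeas hbound hbint hlim
    have hI : ∫ σ in Ioi (0:ℝ), f₀ σ = c * ∫ σ in Ioi (0:ℝ),
        σ ^ (2 * s) /
          ‖((σ ^ (2 * s) : ℝ) : ℂ) *
              Complex.exp (Complex.I * (Real.pi : ℂ) * (s : ℂ)) -
            (ε : ℂ) * (b : ℂ) * (σ : ℂ)‖ ^ 2 := by
      rw [hf0_def]
      exact integral_const_mul c _
    rw [hI] at key
    have final := key.const_mul (4 * Real.pi)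
    simp only [branchCutIntegral]
    convert final using 2
    · ring
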